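/- Let Y_1, …, Y_n be independent random vectors in ℝ^M (M ≥ 3) with zero mean and E[|Y_i|_∞²] < ∞ for each i. Then E[|Σ_{i=1}^n Y_i|_∞²] ≤ (2e·log M − e) · Σ_{i=1}^n E[|Y_i|_∞²], where |·|_∞ is the sup-norm on ℝ^M. -/

import Mathlib

open MeasureTheory ProbabilityTheory
open Real Finset


lemma slope_zero_of_ne {f : ℝ → ℝ} (hf0 : f 0 = 0) {v : ℝ} (hv : v ≠ 0) :
    slope f 0 v = f v / v := by
  simp [slope_def_field, hf0, div_eq_iff hv]

lemma abs_rpow_hasDerivAt {q : ℝ} (hq : 1 < q) (u : ℝ) :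
    HasDerivAt (fun v : ℝ => |v| ^ q) (q * |u| ^ (q - 2) * u) u := by
  rcases eq_or_ne u 0 with rfl | hu
  · simp only [abs_zero, mul_zero]
    rw [hasDerivAt_iff_tendsto_slope]
    have h1 : Filter.Tendsto (fun v : ℝ => |v| ^ (q - 1)) (nhdsWithin 0 {(0:ℝ)}ᶜ) (nhds 0) := by
      have hc : ContinuousAt (fun v : ℝ => |v| ^ (q - 1)) 0 := by
        apply ContinuousAt.rpow_const (continuous_abs.continuousAt)
        right; linarith
      have : Filter.Tendsto (fun v : ℝ => |v| ^ (q - 1)) (nhds 0) (nhds 0) := by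
        simpa [Real.zero_rpow (by linarith : q - 1 ≠ 0)] using hc.tendsto
      exact this.mono_left nhdsWithin_le_nhds
    apply squeeze_zero_norm _ h1
    intro v
    rcases eq_or_ne v 0 with rfl | hv
    · simp [slope_def_field]
      positivity
    · rw [slope_zero_of_ne (by simp [Real.zero_rpow (by linarith : q ≠ 0)]) hv]
      rw [Real.norm_eq_abs, abs_div, abs_of_nonneg (Real.rpow_nonneg (abs_nonneg v) q)]
      rw [div_le_iff₀ (abs_pos.mpr hv), ← Real.rpow_add_one (abs_ne_zero.mpr hv) (q-1)]
      norm_num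
  · have h1 : HasDerivAt (fun v : ℝ => |v|) (SignType.sign u : ℝ) u := hasDerivAt_abs hu
    have h2 : HasDerivAt (fun w : ℝ => w ^ q) (q * |u| ^ (q - 1)) |u| :=
      Real.hasDerivAt_rpow_const (Or.inl (abs_ne_zero.mpr hu))
    have := h2.comp u h1
    refine this.congr_deriv (Eq.symm ?_)
    have habs : |u| ^ (q - 1) = |u| ^ (q - 2) * |u| := by
      rw [← Real.rpow_add_one (abs_ne_zero.mpr hu) (q-2), show q - 2 + 1 = q - 1 by ring]
    rw [habs]
    rcases lt_or_gt_of_ne hu with h | h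
    · simp only [abs_of_neg h, sign_neg h, SignType.coe_neg_one]; ring
    · simp only [abs_of_pos h, sign_pos h, SignType.coe_one]; ring

lemma sgn_rpow_hasDerivAt {r : ℝ} (hr : 0 < r) (u : ℝ) :
    HasDerivAt (fun v : ℝ => |v| ^ r * v) ((r + 1) * |u| ^ r) u := by
  rcases eq_or_ne u 0 with rfl | hu
  · simp only [abs_zero, Real.zero_rpow hr.ne', mul_zero]
    rw [hasDerivAt_iff_tendsto_slope]
    have h1 : Filter.Tendsto (fun v : ℝ => |v| ^ r) (nhdsWithin 0 {(0:ℝ)}ᶜ) (nhds 0) := by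
      have hc : ContinuousAt (fun v : ℝ => |v| ^ r) 0 := by
        apply ContinuousAt.rpow_const (continuous_abs.continuousAt)
        right; linarith
      have : Filter.Tendsto (fun v : ℝ => |v| ^ r) (nhds 0) (nhds 0) := by
        simpa [Real.zero_rpow hr.ne'] using hc.tendsto
      exact this.mono_left nhdsWithin_le_nhds
    apply squeeze_zero_norm _ h1
    intro v
    rcases eq_or_ne v 0 with rfl | hv
    · simp [slope_def_field]
      positivity
    · rw [slope_zero_of_ne (by simp) hv, mul_div_assoc, div_self hv, mul_one,
        Real.norm_eq_abs, abs_of_nonneg (Real.rpow_nonneg (abs_nonneg v) r)]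
  · have h1 : HasDerivAt (fun v : ℝ => |v| ^ r) (r * |u| ^ (r - 1) * (SignType.sign u : ℝ)) u := by
      have h2 : HasDerivAt (fun w : ℝ => w ^ r) (r * |u| ^ (r - 1)) |u| :=
        Real.hasDerivAt_rpow_const (Or.inl (abs_ne_zero.mpr hu))
      exact h2.comp u (hasDerivAt_abs hu)
    have := h1.mul (hasDerivAt_id u)
    refine this.congr_deriv (Eq.symm ?_)
    have hru : |u| ^ (r - 1) * |u| = |u| ^ r := by
      rw [← Real.rpow_add_one (abs_ne_zero.mpr hu) (r-1)]; norm_num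
    rcases lt_or_gt_of_ne hu with h | h
    · simp only [sign_neg h, id_eq, SignType.coe_neg_one, abs_of_neg h] at hru ⊢
      linear_combination -r * hru
    · simp only [sign_pos h, id_eq, SignType.coe_one, abs_of_pos h] at hru ⊢
      linear_combination -r * hru


noncomputable def Anorm (p : ℝ) {M : ℕ} (x : Fin M → ℝ) : ℝ := ∑ j, |x j| ^ p
noncomputable def psi (p : ℝ) {M : ℕ} (x : Fin M → ℝ) : ℝ := Anorm p x ^ (2/p)
noncomputable def gradA (p : ℝ) {M : ℕ} (x : Fin M → ℝ) : Fin M → ℝ :=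
  fun j => 2 * Anorm p x ^ (2/p - 1) * (|x j| ^ (p-2) * x j)
noncomputable def gd (p : ℝ) {M : ℕ} (x y : Fin M → ℝ) : ℝ := ∑ j, gradA p x j * y j

lemma Anorm_nonneg (p : ℝ) {M : ℕ} (x : Fin M → ℝ) : 0 ≤ Anorm p x :=
  Finset.sum_nonneg fun j _ => Real.rpow_nonneg (abs_nonneg _) p

lemma psi_nonneg (p : ℝ) {M : ℕ} (x : Fin M → ℝ) : 0 ≤ psi p x :=
  Real.rpow_nonneg (Anorm_nonneg p x) _

lemma Anorm_pos {p : ℝ} (hp : 0 < p) {M : ℕ} {x : Fin M → ℝ} (hx : x ≠ 0) :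
    0 < Anorm p x := by
  obtain ⟨j, hj⟩ := Function.ne_iff.mp hx
  apply Finset.sum_pos' (fun i _ => Real.rpow_nonneg (abs_nonneg _) p)
  exact ⟨j, Finset.mem_univ j, Real.rpow_pos_of_pos (abs_pos.mpr hj) p⟩

lemma Anorm_smul {p : ℝ} (hp : 0 < p) {M : ℕ} (c : ℝ) (y : Fin M → ℝ) :
    Anorm p (c • y) = |c| ^ p * Anorm p y := by
  unfold Anorm
  rw [Finset.mul_sum]
  refine Finset.sum_congr rfl fun j _ => ?_
  rw [Pi.smul_apply, smul_eq_mul, abs_mul, Real.mul_rpow (abs_nonneg c) (abs_nonneg _)]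

lemma psi_smul {p : ℝ} (hp : 0 < p) {M : ℕ} (c : ℝ) (y : Fin M → ℝ) :
    psi p (c • y) = c^2 * psi p y := by
  unfold psi
  rw [Anorm_smul hp, Real.mul_rpow (Real.rpow_nonneg (abs_nonneg c) p) (Anorm_nonneg p y),
    ← Real.rpow_mul (abs_nonneg c), mul_div_cancel₀ 2 hp.ne']
  have h9 : |c| ^ (2:ℝ) = c ^ 2 := by
    rw [show (2:ℝ) = ((2:ℕ):ℝ) by norm_num, Real.rpow_natCast]
    exact sq_abs c
  rw [h9]

lemma taylor_quad {f f' f'' : ℝ → ℝ} (h1 : ∀ t, HasDerivAt f (f' t) t)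
    (h2 : ∀ t, HasDerivAt f' (f'' t) t) {c : ℝ} (hc : ∀ t, f'' t ≤ c) :
    f 1 ≤ f 0 + f' 0 + c / 2 := by
  set g : ℝ → ℝ := fun t => f t - c * t^2 / 2 with hg
  have hg' : ∀ t, HasDerivAt g (f' t - c * t) t := by
    intro t
    have h4 : HasDerivAt (fun t : ℝ => c * t^2 / 2) (c * t) t := by
      have h5 := ((hasDerivAt_pow 2 t).const_mul c).div_const 2
      refine h5.congr_deriv (Eq.symm ?_)
      push_cast
      ring
    exact (h1 t).sub h4
  have hd : ∀ t, HasDerivAt (fun t => f' t - c * t) (f'' t - c) t := by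
    intro t
    have h3 : HasDerivAt (fun t : ℝ => c * t) c t := by
      simpa using (hasDerivAt_id t).const_mul c
    exact (h2 t).sub h3
  have hanti : Antitone (fun t => f' t - c * t) := by
    apply antitone_of_deriv_nonpos
    · intro t; exact (hd t).differentiableAt
    · intro t; rw [(hd t).deriv]; linarith [hc t]
  obtain ⟨t0, ht0, heq⟩ := exists_hasDerivAt_eq_slope g (fun t => f' t - c * t) one_pos
    (fun t _ => (hg' t).continuousAt.continuousWithinAt) (fun t _ => hg' t)
  have h6 : f' t0 - c * t0 ≤ f' 0 - c * 0 := hanti (le_of_lt ht0.1)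
  have h7 : g 1 = f 1 - c / 2 := by simp [hg]
  have h8 : g 0 = f 0 := by simp [hg]
  rw [h7, h8] at heq
  have hct0 : c * t0 ≤ c * 1 ∨ True := Or.inr trivial
  nlinarith [ht0.1, ht0.2, hc t0]
section Key

variable {M : ℕ} {p : ℝ}

theorem key_smooth (hp : 2 < p) (x y : Fin M → ℝ) :
    psi p (x + y) ≤ psi p x + gd p x y + (p - 1) * psi p y := by
  have hp0 : 0 < p := by linarith
  have hp1 : 1 < p := by linarith
  have hp2 : 0 < p - 2 := by linarith
  have hexp : 2/p - 1 ≠ 0 := by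
    intro h
    have : p = 2 := by field_simp at h; linarith
    linarith
  have hA0 : Anorm p (0 : Fin M → ℝ) = 0 := by
    simp [Anorm, Real.zero_rpow hp0.ne']
  have hpsi0 : psi p (0 : Fin M → ℝ) = 0 := by
    rw [psi, hA0, Real.zero_rpow (by positivity : (2:ℝ)/p ≠ 0)]
  by_cases hy : y = 0
  · subst hy
    have h1 : gd p x 0 = 0 := by simp [gd]
    rw [add_zero, h1, hpsi0, mul_zero, add_zero, add_zero]
  by_cases hdeg : ∃ t : ℝ, x + t • y = 0
  · obtain ⟨t₀, ht₀⟩ := hdeg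
    have hx : x = (-t₀) • y := by
      funext j
      have := congrFun ht₀ j
      simp at this ⊢
      linarith
    have hxy : x + y = (1 - t₀) • y := by
      funext j
      rw [hx]
      simp only [Pi.add_apply, Pi.smul_apply, smul_eq_mul]
      ring
    have hAy : 0 < Anorm p y := Anorm_pos hp0 hy
    have hsum : ∑ j, (|y j|^(p-2) * y j * y j) = Anorm p y := by
      refine Finset.sum_congr rfl fun j _ => ?_
      rcases eq_or_ne (y j) 0 with h | h
      · simp [h, Real.zero_rpow hp0.ne']
      · have h2 : y j * y j = |y j| ^ (2:ℝ) := by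
          rw [show (2:ℝ) = ((2:ℕ):ℝ) by norm_num, Real.rpow_natCast, sq_abs]; ring
        rw [mul_assoc, h2, ← Real.rpow_add (abs_pos.mpr h)]
        norm_num
    have hpsiA : Anorm p y ^ (2/p-1) * Anorm p y = psi p y := by
      rw [← Real.rpow_add_one hAy.ne', show 2/p - 1 + 1 = 2/p by ring]; rfl
    have hA : Anorm p ((-t₀) • y) = |t₀| ^ p * Anorm p y := by
      rw [Anorm_smul hp0, abs_neg]
    have hgd : gd p x y = -2 * t₀ * psi p y := by
      rcases eq_or_ne t₀ 0 with rfl | ht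
      · have hx0 : x = 0 := by rw [hx]; simp
        rw [hx0]
        simp [gd, gradA]
      · have hone : (|t₀|^p)^(2/p-1) * |t₀|^(p-2) = 1 := by
          rw [← Real.rpow_mul (abs_nonneg t₀), ← Real.rpow_add (abs_pos.mpr ht)]
          rw [show p * (2/p - 1) + (p-2) = 0 by field_simp; ring]
          exact Real.rpow_zero _
        unfold gd gradA
        calc ∑ j, 2 * Anorm p x ^ (2/p-1) * (|x j|^(p-2) * (x j)) * y j
            = ∑ j, (-2*t₀) * ((|t₀|^p)^(2/p-1) * |t₀|^(p-2)) *
                (Anorm p y ^ (2/p-1) * (|y j|^(p-2) * y j * y j)) := by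
              refine Finset.sum_congr rfl fun j _ => ?_
              rw [hx, hA, Real.mul_rpow (Real.rpow_nonneg (abs_nonneg _) _) (Anorm_nonneg p y)]
              have h3 : |((-t₀) • y) j| ^ (p-2) = |t₀|^(p-2) * |y j|^(p-2) := by
                simp only [Pi.smul_apply, smul_eq_mul, abs_mul, abs_neg]
                rw [Real.mul_rpow (abs_nonneg _) (abs_nonneg _)]
              rw [h3]
              simp only [Pi.smul_apply, smul_eq_mul]
              ring
          _ = (-2*t₀) * ((|t₀|^p)^(2/p-1) * |t₀|^(p-2)) *
                (Anorm p y ^ (2/p-1) * ∑ j, (|y j|^(p-2) * y j * y j)) := by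
              rw [← Finset.mul_sum, ← Finset.mul_sum]
          _ = -2 * t₀ * psi p y := by
              rw [hsum, hone, hpsiA]; ring
    have hx2 : psi p x = t₀^2 * psi p y := by
      rw [hx, psi_smul hp0]; ring_nf
    rw [hxy, hgd, hx2, psi_smul hp0]
    nlinarith [psi_nonneg p y]
  · -- smooth case
    push_neg at hdeg
    set A : ℝ → ℝ := fun t => ∑ j, |x j + t * y j| ^ p with hAdef
    have hAeq : ∀ t, A t = Anorm p (x + t • y) := by
      intro t
      unfold Anorm
      refine Finset.sum_congr rfl fun j _ => ?_
      simp
    have hApos : ∀ t, 0 < A t := by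
      intro t
      rw [hAeq t]
      exact Anorm_pos hp0 (hdeg t)
    set A1 : ℝ → ℝ := fun t => ∑ j, (p * |x j + t * y j| ^ (p-2) * (x j + t * y j)) * y j
      with hA1def
    set A2 : ℝ → ℝ := fun t =>
      ∑ j, (p * y j) * ((p - 2 + 1) * |x j + t * y j| ^ (p-2) * y j) with hA2def
    have haff : ∀ (j : Fin M) (t : ℝ), HasDerivAt (fun s => x j + s * y j) (y j) t := by
      intro j t
      simpa using (hasDerivAt_mul_const (y j)).const_add (x j)
    have hA : ∀ t, HasDerivAt A (A1 t) t := by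
      intro t
      exact HasDerivAt.fun_sum fun j _ =>
        by have h := (abs_rpow_hasDerivAt hp1 (x j + t * y j)).comp t (haff j t); exact h
    have hA1 : ∀ t, HasDerivAt A1 (A2 t) t := by
      intro t
      have hfun : A1 = fun t => ∑ j, (p * y j) * (|x j + t * y j| ^ (p-2) * (x j + t * y j)) := by
        funext s
        exact Finset.sum_congr rfl fun j _ => by ring
      rw [hfun]
      refine HasDerivAt.fun_sum fun j _ => ?_
      exact (HasDerivAt.comp t (sgn_rpow_hasDerivAt hp2 (x j + t * y j))
        (haff j t)).const_mul (p * y j)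
    set F1 : ℝ → ℝ := fun t => 2/p * A t ^ (2/p - 1) * A1 t with hF1def
    have hF : ∀ t, HasDerivAt (fun t => A t ^ (2/p)) (F1 t) t := by
      intro t
      exact (Real.hasDerivAt_rpow_const (Or.inl (hApos t).ne')).comp t (hA t)
    set F2 : ℝ → ℝ := fun t =>
      2/p * ((2/p - 1) * A t ^ (2/p - 2) * A1 t) * A1 t + 2/p * A t ^ (2/p - 1) * A2 t with hF2def
    have hF1 : ∀ t, HasDerivAt F1 (F2 t) t := by
      intro t
      have h1 : HasDerivAt (fun t => A t ^ (2/p - 1)) ((2/p - 1) * A t ^ (2/p - 2) * A1 t) t := by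
        have h2 := (Real.hasDerivAt_rpow_const (x := A t) (p := 2/p - 1)
          (Or.inl (hApos t).ne')).comp t (hA t)
        rw [show 2/p - 2 = 2/p - 1 - 1 by ring]
        exact h2
      exact (h1.const_mul (2/p)).mul (hA1 t)
    have hbound : ∀ t, F2 t ≤ 2 * (p - 1) * psi p y := by
      intro t
      have hpos1 : (0:ℝ) < 2/p := by positivity
      have hneg : 2/p - 1 < 0 := by
        have : 2/p < 1 := by rw [div_lt_one hp0]; linarith
        linarith
      have hterm1 : 2/p * ((2/p - 1) * A t ^ (2/p - 2) * A1 t) * A1 t ≤ 0 := by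
        have heq : 2/p * ((2/p - 1) * A t ^ (2/p - 2) * A1 t) * A1 t
            = (2/p * (2/p - 1)) * (A t ^ (2/p - 2) * (A1 t)^2) := by ring
        rw [heq]
        apply mul_nonpos_of_nonpos_of_nonneg
        · nlinarith [mul_pos hpos1 (neg_pos.mpr hneg)]
        · positivity
      have hterm2 : 2/p * A t ^ (2/p - 1) * A2 t ≤ 2 * (p - 1) * psi p y := by
        have hS : A2 t = p * (p-1) * ∑ j, |x j + t * y j| ^ (p-2) * (y j)^2 := by
          rw [hA2def]
          simp only
          rw [Finset.mul_sum]
          refine Finset.sum_congr rfl fun j _ => ?_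
          ring
        have hconj : (p/(p-2)).HolderConjugate (p/2) := by
          constructor
          · rw [inv_div, inv_div, inv_one, ← add_div, sub_add_cancel, div_self hp0.ne']
          · exact div_pos hp0 hp2
          · positivity
        have hold := Real.inner_le_Lp_mul_Lq Finset.univ
          (fun j => |x j + t * y j| ^ (p-2)) (fun j => (y j)^2) hconj
        have habs1 : ∀ z : ℝ, abs (|z| ^ (p-2)) = |z| ^ (p-2) := fun z =>
          abs_of_nonneg (Real.rpow_nonneg (abs_nonneg _) _)
        have e3 : ∀ z : ℝ, (|z| ^ (p-2)) ^ (p/(p-2)) = |z| ^ p := fun z => by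
          rw [← Real.rpow_mul (abs_nonneg _)]
          congr 1
          rw [mul_comm, div_mul_cancel₀ _ hp2.ne']
        have e4 : ∀ z : ℝ, (|z| ^ (2:ℕ) : ℝ) ^ (p/2) = |z| ^ p := fun z => by
          rw [← Real.rpow_natCast |z| 2, ← Real.rpow_mul (abs_nonneg _),
            show ((2:ℕ):ℝ) * (p/2) = p by push_cast; ring]
        have hL : ∑ j, |x j + t * y j| ^ (p-2) * (y j)^2 ≤
            A t ^ ((p-2)/p) * Anorm p y ^ (2/p) := by
          refine le_trans hold (le_of_eq ?_)
          rw [one_div_div, one_div_div]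
          congr 1
          · congr 1
            refine Finset.sum_congr rfl fun j _ => ?_
            rw [habs1, e3]
          · congr 1
            refine Finset.sum_congr rfl fun j _ => ?_
            rw [abs_of_nonneg (sq_nonneg _), ← sq_abs, e4]
        have hrw : 2/p * A t ^ (2/p - 1) * A2 t
            = 2 * (p-1) * (A t ^ (2/p - 1) * ∑ j, |x j + t * y j| ^ (p-2) * (y j)^2) := by
          rw [hS]
          field_simp
        rw [hrw]
        calc 2 * (p-1) * (A t ^ (2/p - 1) * ∑ j, |x j + t * y j| ^ (p-2) * (y j)^2)
            ≤ 2 * (p-1) * (A t ^ (2/p - 1) * (A t ^ ((p-2)/p) * Anorm p y ^ (2/p))) := by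
              apply mul_le_mul_of_nonneg_left
              · exact mul_le_mul_of_nonneg_left hL (Real.rpow_nonneg (hApos t).le _)
              · nlinarith
          _ = 2 * (p-1) * psi p y := by
              rw [← mul_assoc (A t ^ (2/p - 1)), ← Real.rpow_add (hApos t)]
              rw [show 2/p - 1 + (p-2)/p = 0 by field_simp; ring, Real.rpow_zero, one_mul]
              rfl
      calc F2 t = 2/p * ((2/p - 1) * A t ^ (2/p - 2) * A1 t) * A1 t
            + 2/p * A t ^ (2/p - 1) * A2 t := rfl
        _ ≤ 0 + 2 * (p-1) * psi p y := add_le_add hterm1 hterm2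
        _ = 2 * (p-1) * psi p y := by ring
    have htay := taylor_quad hF hF1 hbound
    have he1 : A 1 = Anorm p (x + y) := by
      rw [hAeq 1]
      norm_num
    have he0 : A 0 = Anorm p x := by
      rw [hAeq 0]
      congr 1
      funext j
      simp
    have hgd0 : F1 0 = gd p x y := by
      rw [hF1def]
      simp only
      rw [he0]
      have hA10 : A1 0 = ∑ j, (p * |x j| ^ (p-2) * x j) * y j := by
        rw [hA1def]
        refine Finset.sum_congr rfl fun j _ => ?_
        norm_num
      rw [hA10]
      unfold gd gradA
      rw [Finset.mul_sum]
      refine Finset.sum_congr rfl fun j _ => ?_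
      field_simp
    rw [hgd0, he1, he0] at htay
    have hfinal : psi p (x + y) ≤ psi p x + gd p x y + 2 * (p-1) * psi p y / 2 := by
      simpa [psi] using htay
    linarith [hfinal]

end Key
section Compare

variable {M : ℕ} {p : ℝ}

lemma Anorm_continuous (hp0 : 0 < p) : Continuous fun x : Fin M → ℝ => Anorm p x := by
  unfold Anorm
  apply continuous_finset_sum
  intro j _
  apply Continuous.rpow_const ((continuous_apply j).abs)
  intro x
  right; exact hp0.le

lemma psi_continuous (hp0 : 0 < p) : Continuous fun x : Fin M → ℝ => psi p x := by
  unfold psi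
  apply Continuous.rpow_const (Anorm_continuous hp0)
  intro x
  right; positivity

lemma gradA_measurable (hp0 : 0 < p) (j : Fin M) :
    Measurable fun x : Fin M → ℝ => gradA p x j := by
  unfold gradA
  apply Measurable.mul
  · apply Measurable.const_mul
    exact ((Anorm_continuous hp0).measurable).pow measurable_const
  · exact ((((continuous_apply j).abs).measurable).pow measurable_const).mul
      (continuous_apply j).measurable

lemma single_le_Anorm (hp0 : 0 < p) (x : Fin M → ℝ) (j : Fin M) :
    |x j| ^ p ≤ Anorm p x :=
  Finset.single_le_sum (fun i _ => Real.rpow_nonneg (abs_nonneg (x i)) p) (Finset.mem_univ j)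

lemma Anorm_le (hp0 : 0 < p) (x : Fin M → ℝ) :
    Anorm p x ≤ (M : ℝ) * ‖x‖ ^ p := by
  have h : ∀ j, |x j| ^ p ≤ ‖x‖ ^ p := by
    intro j
    apply Real.rpow_le_rpow (abs_nonneg _) _ hp0.le
    rw [← Real.norm_eq_abs]
    exact norm_le_pi_norm x j
  calc Anorm p x ≤ ∑ _j : Fin M, ‖x‖ ^ p := Finset.sum_le_sum fun j _ => h j
    _ = (M : ℝ) * ‖x‖ ^ p := by rw [Finset.sum_const, Finset.card_univ, Fintype.card_fin,
      nsmul_eq_mul]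

lemma sq_norm_le_psi (hp0 : 0 < p) (hM : 0 < M) (x : Fin M → ℝ) :
    ‖x‖ ^ 2 ≤ psi p x := by
  have : Nonempty (Fin M) := Fin.pos_iff_nonempty.mp hM
  obtain ⟨j, _, hj⟩ := Finset.exists_mem_eq_sup Finset.univ Finset.univ_nonempty
    (fun j => ‖x j‖₊)
  have hnorm : ‖x‖ = |x j| := by
    rw [Pi.norm_def, hj]
    simp [Real.norm_eq_abs]
  have h1 : ‖x‖ ≤ Anorm p x ^ (1/p) := by
    rw [hnorm]
    calc |x j| = (|x j| ^ p) ^ (1/p) := by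
          rw [← Real.rpow_mul (abs_nonneg _), mul_one_div, div_self hp0.ne', Real.rpow_one]
      _ ≤ Anorm p x ^ (1/p) := Real.rpow_le_rpow (Real.rpow_nonneg (abs_nonneg _) _)
          (single_le_Anorm hp0 x j) (by positivity)
  calc ‖x‖ ^ 2 ≤ (Anorm p x ^ (1/p)) ^ 2 := by
        apply pow_le_pow_left₀ (norm_nonneg x) h1
    _ = psi p x := by
        rw [← Real.rpow_natCast (Anorm p x ^ (1/p)) 2, ← Real.rpow_mul (Anorm_nonneg p x)]
        unfold psi
        congr 1
        push_cast
        ring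

lemma psi_le_sq_norm (hp0 : 0 < p) (x : Fin M → ℝ) :
    psi p x ≤ (M : ℝ) ^ ((2:ℝ)/p) * ‖x‖ ^ 2 := by
  unfold psi
  calc Anorm p x ^ (2/p) ≤ ((M : ℝ) * ‖x‖ ^ p) ^ (2/p) := by
        apply Real.rpow_le_rpow (Anorm_nonneg p x) (Anorm_le hp0 x) (by positivity)
    _ = (M : ℝ) ^ ((2:ℝ)/p) * ‖x‖ ^ 2 := by
        rw [Real.mul_rpow (Nat.cast_nonneg M) (Real.rpow_nonneg (norm_nonneg x) p),
          ← Real.rpow_mul (norm_nonneg x)]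
        congr 1
        rw [mul_div_assoc', mul_comm, mul_div_assoc, div_self hp0.ne', mul_one,
          ← Real.rpow_natCast ‖x‖ 2]
        norm_num

lemma abs_gradA_le (hp : 2 < p) (x : Fin M → ℝ) (j : Fin M) :
    |gradA p x j| ≤ 2 * (M : ℝ) ^ ((1:ℝ)/p) * ‖x‖ := by
  have hp0 : 0 < p := by linarith
  rcases eq_or_ne x 0 with rfl | hx
  · have : gradA p (0 : Fin M → ℝ) j = 0 := by
      simp [gradA]
    rw [this, abs_zero]
    positivity
  · have hA : 0 < Anorm p x := Anorm_pos hp0 hx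
    have habs : |gradA p x j| = 2 * Anorm p x ^ (2/p - 1) * (|x j| ^ (p-1)) := by
      unfold gradA
      rw [abs_mul, abs_mul]
      have h1 : |Anorm p x ^ (2/p-1)| = Anorm p x ^ (2/p-1) :=
        abs_of_nonneg (Real.rpow_nonneg hA.le _)
      have h2 : abs (|x j| ^ (p-2) * x j) = |x j| ^ (p-1) := by
        rw [abs_mul, abs_of_nonneg (Real.rpow_nonneg (abs_nonneg _) _)]
        rcases eq_or_ne (x j) 0 with h | h
        · rw [h]; simp [Real.zero_rpow (by linarith : p - 2 ≠ 0),
            Real.zero_rpow (by linarith : p - 1 ≠ 0)]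
        · rw [← Real.rpow_add_one (abs_ne_zero.mpr h)]
          congr 1
          ring
      rw [h1, h2]
      norm_num
    rw [habs]
    have h3 : |x j| ^ (p-1) ≤ Anorm p x ^ ((p-1)/p) := by
      calc |x j| ^ (p-1) = (|x j| ^ p) ^ ((p-1)/p) := by
            rw [← Real.rpow_mul (abs_nonneg _)]
            congr 1
            field_simp
        _ ≤ Anorm p x ^ ((p-1)/p) := Real.rpow_le_rpow (Real.rpow_nonneg (abs_nonneg _) _)
            (single_le_Anorm hp0 x j) (by apply div_nonneg <;> linarith)
    calc 2 * Anorm p x ^ (2/p - 1) * (|x j| ^ (p-1))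
        ≤ 2 * Anorm p x ^ (2/p - 1) * Anorm p x ^ ((p-1)/p) := by
          apply mul_le_mul_of_nonneg_left h3
          have := Real.rpow_nonneg hA.le (2/p - 1)
          linarith
      _ = 2 * Anorm p x ^ ((1:ℝ)/p) := by
          rw [mul_assoc, ← Real.rpow_add hA]
          congr 2
          field_simp
          ring
      _ ≤ 2 * ((M : ℝ) * ‖x‖ ^ p) ^ ((1:ℝ)/p) := by
          apply mul_le_mul_of_nonneg_left _ (by norm_num)
          exact Real.rpow_le_rpow hA.le (Anorm_le hp0 x) (by positivity)
      _ = 2 * (M : ℝ) ^ ((1:ℝ)/p) * ‖x‖ := by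
          rw [Real.mul_rpow (Nat.cast_nonneg M) (Real.rpow_nonneg (norm_nonneg x) p),
            ← Real.rpow_mul (norm_nonneg x), mul_one_div, div_self hp0.ne', Real.rpow_one]
          ring

end Compare

lemma psi_zero {M : ℕ} {p : ℝ} (hp0 : 0 < p) : psi p (0 : Fin M → ℝ) = 0 := by
  have hA0 : Anorm p (0 : Fin M → ℝ) = 0 := by simp [Anorm, Real.zero_rpow hp0.ne']
  rw [psi, hA0, Real.zero_rpow (by positivity : (2:ℝ)/p ≠ 0)]

theorem stmt_7 {Ω : Type*} [MeasurableSpace Ω] (μ : Measure Ω) [IsProbabilityMeasure μ]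
    (n M : ℕ) (hM : 3 ≤ M) (Y : Fin n → Ω → (Fin M → ℝ))
    (hmeas : ∀ i, Measurable (Y i))
    (hindep : iIndepFun Y μ)
    (hint : ∀ i, Integrable (Y i) μ)
    (hint2 : ∀ i, Integrable (fun ω => ‖Y i ω‖ ^ 2) μ)
    (hmean : ∀ i, ∫ ω, Y i ω ∂μ = 0) :
    ∫ ω, ‖∑ i, Y i ω‖ ^ 2 ∂μ ≤
      (2 * Real.exp 1 * Real.log M - Real.exp 1) *
        ∑ i, ∫ ω, ‖Y i ω‖ ^ 2 ∂μ := by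
  classical
  set p : ℝ := 2 * Real.log M with hpdef
  have hM0 : (3:ℝ) ≤ (M:ℝ) := by exact_mod_cast hM
  have hMpos : (0:ℝ) < M := by linarith
  have hlog : 1 < Real.log M := by
    rw [Real.lt_log_iff_exp_lt hMpos]
    calc Real.exp 1 < 2.7182818286 := Real.exp_one_lt_d9
      _ ≤ (M:ℝ) := by linarith
  have hp : 2 < p := by rw [hpdef]; linarith
  have hp0 : 0 < p := by linarith
  have hlogne : Real.log M ≠ 0 := by linarith
  have hMrpow2 : (M:ℝ) ^ ((2:ℝ)/p) = Real.exp 1 := by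
    rw [Real.rpow_def_of_pos hMpos]
    congr 1
    rw [hpdef]
    field_simp
  -- basic integrability
  have hSmeas : ∀ s : Finset (Fin n), Measurable (fun ω => ∑ i ∈ s, Y i ω) :=
    fun s => Finset.measurable_sum s (fun i _ => hmeas i)
  have hY2 : ∀ i, MemLp (Y i) 2 μ := fun i =>
    (memLp_two_iff_integrable_sq_norm (hmeas i).aestronglyMeasurable).2 (hint2 i)
  have hS2 : ∀ s : Finset (Fin n), MemLp (fun ω => ∑ i ∈ s, Y i ω) 2 μ := by
    intro s
    have h := memLp_finsetSum' s (fun i (_ : i ∈ s) => hY2 i)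
    have h2 : (fun ω => ∑ i ∈ s, Y i ω) = ∑ i ∈ s, Y i := by
      funext ω
      rw [Finset.sum_apply]
    rw [h2]
    exact h
  have hSnorm2 : ∀ s : Finset (Fin n), Integrable (fun ω => ‖∑ i ∈ s, Y i ω‖^2) μ := fun s =>
    (memLp_two_iff_integrable_sq_norm (hSmeas s).aestronglyMeasurable).1 (hS2 s)
  have hpsi_int : ∀ (f : Ω → Fin M → ℝ), Measurable f →
      Integrable (fun ω => ‖f ω‖^2) μ → Integrable (fun ω => psi p (f ω)) μ := by
    intro f hf hf2
    apply Integrable.mono' (hf2.const_mul ((M:ℝ)^((2:ℝ)/p)))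
    · exact ((psi_continuous hp0).measurable.comp hf).aestronglyMeasurable
    · filter_upwards with ω
      rw [Real.norm_eq_abs, abs_of_nonneg (psi_nonneg p _)]
      exact psi_le_sq_norm hp0 _
  have hpsiS : ∀ s : Finset (Fin n), Integrable (fun ω => psi p (∑ i ∈ s, Y i ω)) μ :=
    fun s => hpsi_int _ (hSmeas s) (hSnorm2 s)
  have hpsiY : ∀ i, Integrable (fun ω => psi p (Y i ω)) μ :=
    fun i => hpsi_int _ (hmeas i) (hint2 i)
  -- main induction
  have main : ∀ s : Finset (Fin n), ∫ ω, psi p (∑ i ∈ s, Y i ω) ∂μ ≤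
      (p - 1) * ∑ i ∈ s, ∫ ω, psi p (Y i ω) ∂μ := by
    intro s
    induction s using Finset.induction_on with
    | empty =>
      simp [psi_zero hp0]
    | @insert i s hi ih =>
      set S : Ω → Fin M → ℝ := fun ω => ∑ k ∈ s, Y k ω with hSdef
      have hSind : IndepFun S (Y i) μ := by
        have h := hindep.indepFun_finsetSum_of_notMem hmeas hi
        have hfe : S = ∑ j ∈ s, Y j := by
          funext ω
          rw [hSdef, Finset.sum_apply]
        rw [hfe]
        exact h
      have hYj_int : ∀ j : Fin M, Integrable (fun ω => Y i ω j) μ := by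
        intro j
        have := (ContinuousLinearMap.proj (R := ℝ) (φ := fun _ : Fin M => ℝ) j).integrable_comp
          (hint i)
        simpa using this
      have hG_int : ∀ j : Fin M, Integrable (fun ω => gradA p (S ω) j) μ := by
        intro j
        apply Integrable.mono' ((((hS2 s).integrable one_le_two).norm).const_mul
          (2 * (M:ℝ) ^ ((1:ℝ)/p)))
        · exact ((gradA_measurable hp0 j).comp (hSmeas s)).aestronglyMeasurable
        · filter_upwards with ω
          rw [Real.norm_eq_abs]
          exact abs_gradA_le hp (S ω) j
      have hgd_int : ∀ j : Fin M, Integrable (fun ω => gradA p (S ω) j * Y i ω j) μ := by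
        intro j
        have hind_j : IndepFun (fun ω => gradA p (S ω) j) (fun ω => Y i ω j) μ :=
          hSind.comp (gradA_measurable hp0 j) (measurable_pi_apply j)
        exact hind_j.integrable_mul (hG_int j) (hYj_int j)
      have hgdint : Integrable (fun ω => gd p (S ω) (Y i ω)) μ := by
        have := integrable_finset_sum (μ := μ) Finset.univ
          (fun j (_ : j ∈ Finset.univ) => hgd_int j)
        simpa [gd] using this
      have hgd0 : ∫ ω, gd p (S ω) (Y i ω) ∂μ = 0 := by
        unfold gd
        rw [integral_finset_sum Finset.univ (fun j _ => hgd_int j)]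
        apply Finset.sum_eq_zero
        intro j _
        have hind_j : IndepFun (fun ω => gradA p (S ω) j) (fun ω => Y i ω j) μ :=
          hSind.comp (gradA_measurable hp0 j) (measurable_pi_apply j)
        rw [hind_j.integral_fun_mul_eq_mul_integral
          ((gradA_measurable hp0 j).comp (hSmeas s)).aestronglyMeasurable
          ((measurable_pi_apply j).comp (hmeas i)).aestronglyMeasurable]
        have hYmean : ∫ ω, Y i ω j ∂μ = 0 := by
          have h2 := (ContinuousLinearMap.proj (R := ℝ) (φ := fun _ : Fin M => ℝ) j).integral_comp_comm
            (hint i)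
          rw [hmean i] at h2
          simpa using h2
        rw [hYmean, mul_zero]
      have hpsiS' : Integrable (fun ω => psi p (S ω)) μ := hpsiS s
      have hSum : (fun ω => psi p (∑ k ∈ insert i s, Y k ω)) =
          fun ω => psi p (S ω + Y i ω) := by
        funext ω
        rw [Finset.sum_insert hi, add_comm]
      have hle : ∫ ω, psi p (∑ k ∈ insert i s, Y k ω) ∂μ ≤
          ∫ ω, (psi p (S ω) + gd p (S ω) (Y i ω) + (p-1) * psi p (Y i ω)) ∂μ := by
        rw [show (∫ ω, psi p (∑ k ∈ insert i s, Y k ω) ∂μ)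
            = ∫ ω, psi p (S ω + Y i ω) ∂μ by rw [hSum]]
        apply integral_mono _ ((hpsiS'.add hgdint).add ((hpsiY i).const_mul (p-1)))
          (fun ω => key_smooth hp (S ω) (Y i ω))
        have h3 := hpsiS (insert i s)
        rw [hSum] at h3
        exact h3
      have hfg : Integrable (fun ω => psi p (S ω) + gd p (S ω) (Y i ω)) μ :=
        hpsiS'.add hgdint
      have hh : Integrable (fun ω => (p-1) * psi p (Y i ω)) μ := (hpsiY i).const_mul (p-1)
      rw [integral_add hfg hh, integral_add hpsiS' hgdint, hgd0, integral_const_mul] at hle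
      rw [Finset.sum_insert hi]
      have ih' : ∫ ω, psi p (S ω) ∂μ ≤ (p - 1) * ∑ i ∈ s, ∫ ω, psi p (Y i ω) ∂μ := ih
      rw [mul_add]
      linarith [hle, ih']
  -- assemble
  have h1 : ∫ ω, ‖∑ i, Y i ω‖^2 ∂μ ≤ ∫ ω, psi p (∑ i, Y i ω) ∂μ := by
    apply integral_mono (hSnorm2 Finset.univ) (hpsiS Finset.univ)
    intro ω
    exact sq_norm_le_psi hp0 (by omega) _
  have h2 : ∀ i, ∫ ω, psi p (Y i ω) ∂μ ≤ Real.exp 1 * ∫ ω, ‖Y i ω‖^2 ∂μ := by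
    intro i
    rw [← hMrpow2, ← integral_const_mul]
    exact integral_mono (hpsiY i) ((hint2 i).const_mul _) (fun ω => psi_le_sq_norm hp0 _)
  have h3 := main Finset.univ
  have h4 : ∑ i, ∫ ω, psi p (Y i ω) ∂μ ≤ Real.exp 1 * ∑ i, ∫ ω, ‖Y i ω‖^2 ∂μ := by
    rw [Finset.mul_sum]
    exact Finset.sum_le_sum fun i _ => h2 i
  have h5 : (p - 1) * ∑ i, ∫ ω, psi p (Y i ω) ∂μ ≤
      (p - 1) * (Real.exp 1 * ∑ i, ∫ ω, ‖Y i ω‖^2 ∂μ) :=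
    mul_le_mul_of_nonneg_left h4 (by linarith)
  have h6 : (p - 1) * (Real.exp 1 * ∑ i, ∫ ω, ‖Y i ω‖^2 ∂μ)
      = (2 * Real.exp 1 * Real.log M - Real.exp 1) * ∑ i, ∫ ω, ‖Y i ω‖^2 ∂μ := by
    rw [hpdef]
    ring
  linarith [h1, h3, h5, h6.le, h6.ge]
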